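/- (Main invariant lemma.) Assume the invariant setting with S_A ≠ ∅. Let S'_A = H_{|S_A|−1}(L_A \ {a_A}) and S'_B = H_{|S_B|}(L_B ∪ {a_B}). Then |S'_A| + |S'_B| = h − 1, and performing one advance step restores the invariant: H_h(L') = S'_A ∪ S'_B ∪ {min(L' \ (S'_A ∪ S'_B))}. In particular, S'_A ⊆ H_h(L') and S'_B ⊆ H_h(L'). -/

import Mathlib

def smallSet {α : Type*} [LinearOrder α] (m : ℕ) (L : Finset α) : Finset α :=
  ((L.sort (· ≤ ·)).take m).toFinset

section
variable {α : Type*} [LinearOrder α]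

lemma smallSet_subset {m : ℕ} {L : Finset α} : smallSet m L ⊆ L := by
  intro x hx
  rw [smallSet, List.mem_toFinset] at hx
  exact (Finset.mem_sort _).mp (List.take_subset _ _ hx)

lemma smallSet_card {m : ℕ} {L : Finset α} : (smallSet m L).card = min m L.card := by
  rw [smallSet, List.toFinset_card_of_nodup ((List.take_sublist m _).nodup (Finset.sort_nodup L _)),
    List.length_take, Finset.length_sort]

lemma smallSet_lt {m : ℕ} {L : Finset α} {x y : α}
    (hx : x ∈ smallSet m L) (hy : y ∈ L) (hy' : y ∉ smallSet m L) : x < y := by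
  rw [smallSet, List.mem_toFinset] at hx hy'
  have hsort : (L.sort (· ≤ ·)).Pairwise (· < ·) := (Finset.sortedLT_sort L).pairwise
  have hy2 : y ∈ (L.sort (· ≤ ·)).drop m := by
    have hmem : y ∈ L.sort (· ≤ ·) := (Finset.mem_sort _).mpr hy
    rw [← List.take_append_drop m (L.sort (· ≤ ·)), List.mem_append] at hmem
    tauto
  have h2 : List.Pairwise (· < ·) ((L.sort (· ≤ ·)).take m ++ (L.sort (· ≤ ·)).drop m) := by
    rw [List.take_append_drop]; exact hsort
  exact (List.pairwise_append.mp h2).2.2 x hx y hy2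

lemma eq_smallSet {m : ℕ} {T L : Finset α} (hT : T ⊆ L) (hc : T.card = m)
    (hlt : ∀ x ∈ T, ∀ y ∈ L, y ∉ T → x < y) : T = smallSet m L := by
  by_contra hne
  have hm : m ≤ L.card := hc ▸ Finset.card_le_card hT
  have hcS : (smallSet m L).card = m := by rw [smallSet_card]; omega
  have h1 : ¬ T ⊆ smallSet m L := fun hsub =>
    hne (Finset.eq_of_subset_of_card_le hsub (by omega))
  have h2 : ¬ smallSet m L ⊆ T := fun hsub =>
    hne (Finset.eq_of_subset_of_card_le hsub (by omega)).symm
  obtain ⟨x, hxT, hxS⟩ := Finset.not_subset.mp h1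
  obtain ⟨z, hzS, hzT⟩ := Finset.not_subset.mp h2
  exact absurd (hlt x hxT z (smallSet_subset hzS) hzT)
    (not_lt.mpr (smallSet_lt hzS (hT hxT) hxS).le)

end

/-- main invariant lemma.  Invariant setting: `L_A, L_B` disjoint with
`|L_A| + |L_B| = 2h+1`, `S_A ⊆ L_A`, `S_B ⊆ L_B`, `S_A ∪ S_B = H_h(L_A ∪ L_B)`,
`a_A ∈ L_A`, `a_B ∉ L_A ∪ L_B`, and `S_A ≠ ∅`.  Let `L' = (L_A \ {a_A}) ∪ L_B ∪ {a_B}`,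
`S'_A = H_{|S_A|-1}(L_A \ {a_A})` and `S'_B = H_{|S_B|}(L_B ∪ {a_B})`.  Then
`|S'_A| + |S'_B| = h - 1`, and one advance step restores the invariant:
`L' \ (S'_A ∪ S'_B)` is nonempty and
`H_h(L') = S'_A ∪ S'_B ∪ {min(L' \ (S'_A ∪ S'_B))}`.  In particular `S'_A ⊆ H_h(L')`
and `S'_B ⊆ H_h(L')`. -/
theorem invariant_main_lemma {α : Type*} [LinearOrder α] (h : ℕ)
    (LA LB SA SB : Finset α) (hdisj : Disjoint LA LB)
    (hcard : LA.card + LB.card = 2 * h + 1)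
    (hSA : SA ⊆ LA) (hSB : SB ⊆ LB)
    (hinv : SA ∪ SB = smallSet h (LA ∪ LB))
    (aA aB : α) (haA : aA ∈ LA) (haB : aB ∉ LA ∪ LB)
    (hSAne : SA.Nonempty) :
    (smallSet (SA.card - 1) (LA \ {aA})).card +
      (smallSet SB.card (LB ∪ {aB})).card = h - 1 ∧
    (∃ hne : (((LA \ {aA}) ∪ LB ∪ {aB}) \
        (smallSet (SA.card - 1) (LA \ {aA}) ∪ smallSet SB.card (LB ∪ {aB}))).Nonempty,
      smallSet h ((LA \ {aA}) ∪ LB ∪ {aB}) =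
        smallSet (SA.card - 1) (LA \ {aA}) ∪ smallSet SB.card (LB ∪ {aB}) ∪
          {(((LA \ {aA}) ∪ LB ∪ {aB}) \
              (smallSet (SA.card - 1) (LA \ {aA}) ∪
                smallSet SB.card (LB ∪ {aB}))).min' hne}) ∧
    smallSet (SA.card - 1) (LA \ {aA}) ⊆ smallSet h ((LA \ {aA}) ∪ LB ∪ {aB}) ∧
    smallSet SB.card (LB ∪ {aB}) ⊆ smallSet h ((LA \ {aA}) ∪ LB ∪ {aB}) := by
  classical
  set s := SA.card with hs
  set t := SB.card with ht
  have haBA : aB ∉ LA := fun hm => haB (Finset.mem_union_left _ hm)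
  have haBB : aB ∉ LB := fun hm => haB (Finset.mem_union_right _ hm)
  have hdisjS : Disjoint SA SB := hdisj.mono hSA hSB
  have hcardU : (LA ∪ LB).card = 2 * h + 1 := by
    rw [Finset.card_union_of_disjoint hdisj]; exact hcard
  have hst : s + t = h := by
    have h1 : (SA ∪ SB).card = s + t := Finset.card_union_of_disjoint hdisjS
    rw [hinv, smallSet_card, hcardU] at h1
    omega
  have hs1 : 1 ≤ s := Finset.card_pos.mpr hSAne
  have hsLA : s ≤ LA.card := Finset.card_le_card hSA
  have htLB : t ≤ LB.card := Finset.card_le_card hSB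
  have hinvlt : ∀ x ∈ SA ∪ SB, ∀ y ∈ LA ∪ LB, y ∉ SA ∪ SB → x < y := by
    intro x hx y hy hy'
    rw [hinv] at hx hy'
    exact smallSet_lt hx hy hy'
  set SA' := smallSet (s - 1) (LA \ {aA}) with hSA'
  set SB' := smallSet t (LB ∪ {aB}) with hSB'
  set L' := (LA \ {aA}) ∪ LB ∪ {aB} with hL'
  have hcardLA' : (LA \ {aA}).card = LA.card - 1 := by
    rw [Finset.card_sdiff_of_subset (Finset.singleton_subset_iff.mpr haA), Finset.card_singleton]
  have hcardSA' : SA'.card = s - 1 := by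
    rw [hSA', smallSet_card, hcardLA']; omega
  have hcardSB' : SB'.card = t := by
    rw [hSB', smallSet_card, Finset.card_union_of_disjoint
      (Finset.disjoint_singleton_right.mpr haBB), Finset.card_singleton]
    omega
  -- SA' ⊆ SA
  have hS'Asub : SA' ⊆ SA := by
    intro x hx
    by_contra hxSA
    have hxLA : x ∈ LA := (Finset.mem_sdiff.mp (smallSet_subset hx)).1
    have hall : SA.erase aA ⊆ SA' := by
      intro z hz
      by_contra hz'
      obtain ⟨hzne, hzSA⟩ := Finset.mem_erase.mp hz
      have hzLA : z ∈ LA \ {aA} :=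
        Finset.mem_sdiff.mpr ⟨hSA hzSA, by simp [hzne]⟩
      have h1 : x < z := smallSet_lt hx hzLA hz'
      have h2 : z < x := hinvlt z (Finset.mem_union_left _ hzSA)
        x (Finset.mem_union_left _ hxLA)
        (by
          intro hxmem
          rcases Finset.mem_union.mp hxmem with hm | hm
          · exact hxSA hm
          · exact (Finset.disjoint_left.mp hdisj hxLA) (hSB hm))
      exact absurd h1 h2.asymm
    have hle : s - 1 ≤ (SA.erase aA).card := by
      by_cases hmem : aA ∈ SA
      · rw [Finset.card_erase_of_mem hmem]
      · rw [Finset.erase_eq_of_notMem hmem]; omega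
    have heq : SA.erase aA = SA' :=
      Finset.eq_of_subset_of_card_le hall (by omega)
    rw [← heq] at hx
    exact hxSA (Finset.mem_of_mem_erase hx)
  -- SB' = (SB ∪ {aB}).erase M
  have hSBaBne : (SB ∪ {aB} : Finset α).Nonempty :=
    ⟨aB, Finset.mem_union_right _ (Finset.mem_singleton_self _)⟩
  set M := (SB ∪ {aB}).max' hSBaBne with hMdef
  have hMmem : M ∈ SB ∪ {aB} := Finset.max'_mem _ _
  have haBSB : aB ∉ SB := fun hm => haBB (hSB hm)
  have hcardSBaB : (SB ∪ {aB}).card = t + 1 := by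
    rw [Finset.card_union_of_disjoint (Finset.disjoint_singleton_right.mpr haBSB),
      Finset.card_singleton]
  have hSBlt : ∀ z ∈ SB, ∀ y ∈ LB, y ∉ SB → z < y := by
    intro z hz y hy hy'
    exact hinvlt z (Finset.mem_union_right _ hz) y (Finset.mem_union_right _ hy)
      (by
        intro hmem
        rcases Finset.mem_union.mp hmem with hm | hm
        · exact (Finset.disjoint_right.mp hdisj hy) (hSA hm)
        · exact hy' hm)
  have hS'Beq : (SB ∪ {aB}).erase M = SB' := by
    apply eq_smallSet
    · exact (Finset.erase_subset _ _).trans (Finset.union_subset_union_left hSB)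
    · rw [Finset.card_erase_of_mem hMmem, hcardSBaB]
      omega
    · intro x hx y hy hy'
      obtain ⟨hxM, hxmem⟩ := Finset.mem_erase.mp hx
      have hxleM : x ≤ M := Finset.le_max' _ _ hxmem
      by_cases hyM : y = M
      · exact hyM ▸ lt_of_le_of_ne hxleM hxM
      · have hyn : y ∉ SB ∪ {aB} := fun hmem => hy' (Finset.mem_erase.mpr ⟨hyM, hmem⟩)
        have hyLB : y ∈ LB := by
          rcases Finset.mem_union.mp hy with hm | hm
          · exact hm
          · exact absurd (Finset.mem_union_right _ hm) hyn
        have hySB : y ∉ SB := fun hm => hyn (Finset.mem_union_left _ hm)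
        rcases Finset.mem_union.mp hxmem with hxSB | hxaB
        · exact hSBlt x hxSB y hyLB hySB
        · have hxeq : x = aB := Finset.mem_singleton.mp hxaB
          have hMSB : M ∈ SB := by
            rcases Finset.mem_union.mp hMmem with hm | hm
            · exact hm
            · exact absurd (hxeq.trans (Finset.mem_singleton.mp hm).symm) hxM
          exact lt_of_le_of_lt hxleM (hSBlt M hMSB y hyLB hySB)
  set S := SA' ∪ SB' with hSdef
  have hdisjS' : Disjoint SA' SB' := by
    have h1 : SA' ⊆ LA := hS'Asub.trans hSA
    have h2 : SB' ⊆ LB ∪ {aB} := smallSet_subset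
    exact Finset.disjoint_of_subset_left h1 (Finset.disjoint_of_subset_right h2
      (Finset.disjoint_union_right.mpr ⟨hdisj, Finset.disjoint_singleton_right.mpr haBA⟩))
  have hcardS : S.card = h - 1 := by
    rw [hSdef, Finset.card_union_of_disjoint hdisjS', hcardSA', hcardSB']; omega
  have hsubLBaB : LB ∪ {aB} ⊆ L' := by
    rw [hL']
    exact Finset.union_subset
      ((Finset.subset_union_right).trans Finset.subset_union_left)
      Finset.subset_union_right
  have hSL' : S ⊆ L' := by
    rw [hSdef]
    refine Finset.union_subset ?_ ?_
    · exact (smallSet_subset (m := s - 1) (L := LA \ {aA})).trans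
        (Finset.subset_union_left.trans Finset.subset_union_left)
    · exact (smallSet_subset (m := t) (L := LB ∪ {aB})).trans hsubLBaB
  have hcardL' : L'.card = 2 * h + 1 := by
    have hd1 : Disjoint (LA \ {aA}) LB := hdisj.mono_left (Finset.sdiff_subset)
    have hd2 : Disjoint ((LA \ {aA}) ∪ LB) ({aB} : Finset α) := by
      rw [Finset.disjoint_singleton_right, Finset.mem_union]
      push_neg
      exact ⟨fun hm => haBA (Finset.mem_sdiff.mp hm).1, haBB⟩
    rw [hL', Finset.card_union_of_disjoint hd2, Finset.card_union_of_disjoint hd1,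
      hcardLA', Finset.card_singleton]
    have : 1 ≤ LA.card := Finset.card_pos.mpr ⟨aA, haA⟩
    omega
  have hne : (L' \ S).Nonempty := by
    rw [← Finset.card_pos, Finset.card_sdiff_of_subset hSL', hcardL', hcardS]
    omega
  -- key claim
  have hcardSAdiff : (SA \ SA').card = 1 := by
    rw [Finset.card_sdiff_of_subset hS'Asub, hcardSA']; omega
  have hkey : ∀ x ∈ S, ∀ z ∈ L' \ S, z < x → ∀ z' ∈ L' \ S, z' < x → z = z' := by
    intro x hx
    rcases Finset.mem_union.mp hx with hxA | hxB
    · -- x ∈ SA' : every such z equals M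
      have hclaim : ∀ z ∈ L' \ S, z < x → z = M := by
        intro z hz hzx
        obtain ⟨hzL', hzS⟩ := Finset.mem_sdiff.mp hz
        have hzSA' : z ∉ SA' := fun hm => hzS (Finset.mem_union_left _ hm)
        have hzSB' : z ∉ SB' := fun hm => hzS (Finset.mem_union_right _ hm)
        rcases Finset.mem_union.mp hzL' with hz1 | hz2
        · rcases Finset.mem_union.mp hz1 with hzA | hzB
          · exact absurd hzx (smallSet_lt hxA hzA hzSA').asymm
          · -- z ∈ LB
            by_cases hzSBaB : z ∈ SB ∪ {aB}
            · by_contra hzM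
              exact hzSB' (hS'Beq ▸ Finset.mem_erase.mpr ⟨hzM, hzSBaB⟩)
            · have hzSB : z ∉ SB := fun hm => hzSBaB (Finset.mem_union_left _ hm)
              exact absurd hzx (hinvlt x (Finset.mem_union_left _ (hS'Asub hxA))
                z (Finset.mem_union_right _ hzB)
                (fun hmem => by
                  rcases Finset.mem_union.mp hmem with hm | hm
                  · exact (Finset.disjoint_right.mp hdisj hzB) (hSA hm)
                  · exact hzSB hm)).asymm
        · -- z = aB
          have hzmem : z ∈ SB ∪ {aB} := Finset.mem_union_right _ hz2
          by_contra hzM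
          exact hzSB' (hS'Beq ▸ Finset.mem_erase.mpr ⟨hzM, hzmem⟩)
      intro z hz hzx z' hz' hz'x
      rw [hclaim z hz hzx, hclaim z' hz' hz'x]
    · -- x ∈ SB' : every such z lies in SA \ SA', which has card 1
      have hclaim : ∀ z ∈ L' \ S, z < x → z ∈ SA \ SA' := by
        intro z hz hzx
        obtain ⟨hzL', hzS⟩ := Finset.mem_sdiff.mp hz
        have hzSA' : z ∉ SA' := fun hm => hzS (Finset.mem_union_left _ hm)
        have hzSB' : z ∉ SB' := fun hm => hzS (Finset.mem_union_right _ hm)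
        have hzLA : z ∈ LA := by
          rcases Finset.mem_union.mp hzL' with hz1 | hz2
          · rcases Finset.mem_union.mp hz1 with hzA | hzB
            · exact (Finset.mem_sdiff.mp hzA).1
            · exact absurd hzx (smallSet_lt hxB
                (Finset.mem_union_left _ hzB) hzSB').asymm
          · exact absurd hzx (smallSet_lt hxB
              (Finset.mem_union_right _ hz2) hzSB').asymm
        have hzSA : z ∈ SA := by
          by_contra hzSA
          obtain ⟨hxM, hxmem⟩ := Finset.mem_erase.mp (hS'Beq ▸ hxB : x ∈ (SB ∪ {aB}).erase M)
          have hznot : z ∉ SA ∪ SB := by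
            intro hmem
            rcases Finset.mem_union.mp hmem with hm | hm
            · exact hzSA hm
            · exact (Finset.disjoint_left.mp hdisj hzLA) (hSB hm)
          rcases Finset.mem_union.mp hxmem with hxSB | hxaB
          · exact absurd hzx (hinvlt x (Finset.mem_union_right _ hxSB)
              z (Finset.mem_union_left _ hzLA) hznot).asymm
          · have hxeq : x = aB := Finset.mem_singleton.mp hxaB
            have hMSB : M ∈ SB := by
              rcases Finset.mem_union.mp hMmem with hm | hm
              · exact hm
              · exact absurd (hxeq.trans (Finset.mem_singleton.mp hm).symm) hxM
            have h1 : x < M := lt_of_le_of_ne (Finset.le_max' _ _ hxmem) hxM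
            have h2 : M < z := hinvlt M (Finset.mem_union_right _ hMSB)
              z (Finset.mem_union_left _ hzLA) hznot
            exact absurd hzx (h1.trans h2).asymm
        exact Finset.mem_sdiff.mpr ⟨hzSA, hzSA'⟩
      intro z hz hzx z' hz' hz'x
      exact Finset.card_le_one.mp (le_of_eq hcardSAdiff)
        z (hclaim z hz hzx) z' (hclaim z' hz' hz'x)
  -- the final set
  set m0 := (L' \ S).min' hne with hm0def
  have hm0 : m0 ∈ L' \ S := Finset.min'_mem _ _
  have hm0L' : m0 ∈ L' := (Finset.mem_sdiff.mp hm0).1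
  have hm0S : m0 ∉ S := (Finset.mem_sdiff.mp hm0).2
  have hT : S ∪ {m0} = smallSet h L' := by
    apply eq_smallSet
    · exact Finset.union_subset hSL' (Finset.singleton_subset_iff.mpr hm0L')
    · rw [Finset.card_union_of_disjoint (Finset.disjoint_singleton_right.mpr hm0S),
        hcardS, Finset.card_singleton]
      omega
    · intro x hx y hy hy'
      have hyS : y ∉ S := fun hm => hy' (Finset.mem_union_left _ hm)
      have hym0 : y ≠ m0 := fun hm =>
        hy' (Finset.mem_union_right _ (hm ▸ Finset.mem_singleton_self _))
      have hyLS : y ∈ L' \ S := Finset.mem_sdiff.mpr ⟨hy, hyS⟩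
      rcases Finset.mem_union.mp hx with hxS | hxm
      · by_contra hxy
        have hyx : y < x :=
          lt_of_le_of_ne (not_lt.mp hxy) (fun hm => hyS (hm ▸ hxS))
        have hm0x : m0 < x := lt_of_le_of_lt (Finset.min'_le _ _ hyLS) hyx
        exact hym0 (hkey x hxS y hyLS hyx m0 hm0 hm0x)
      · have hxm0 : x = m0 := Finset.mem_singleton.mp hxm
        exact hxm0 ▸ lt_of_le_of_ne (Finset.min'_le _ _ hyLS) hym0.symm
  refine ⟨by rw [hcardSA', hcardSB']; omega, ⟨hne, hT.symm⟩, ?_, ?_⟩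
  · rw [← hT]
    exact Finset.subset_union_left.trans Finset.subset_union_left
  · rw [← hT]
    exact Finset.subset_union_right.trans Finset.subset_union_left
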